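/- Let n ≥ 2 and let V₁, …, Vₙ be an admissible family on H = ℓ²(ℕⁿ; ℂ). Then S := ran V₁ + ⋯ + ran Vₙ is a closed subspace of H, is invariant under every shift Sᵢ, and the orthogonal projection onto S is P_S = I − (I − V₁V₁*)(I − V₂V₂*)⋯(I − VₙVₙ*); equivalently the orthogonal projection onto the quotient module Q = S^⊥ is ∏ᵢ (I − VᵢVᵢ*). -/

import Mathlib

open ContinuousLinearMap

noncomputable section


section Aux

variable {ι : Type*} {R : Type*} [Ring R]

lemma auxProdStar [StarRing R] (f : ι → R) (hs : ∀ i, star (f i) = f i)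
    (hc : ∀ i j, Commute (f i) (f j)) :
    ∀ l : List ι, star ((l.map f).prod) = (l.map f).prod := by
  intro l
  induction l with
  | nil => simp
  | cons a l ih =>
    have hcom : Commute (f a) ((l.map f).prod) :=
      Commute.list_prod_right _ _ (by
        intro x hx
        obtain ⟨j, _, rfl⟩ := List.mem_map.mp hx
        exact hc a j)
    simp only [List.map_cons, List.prod_cons, star_mul, ih, hs a]
    exact hcom.symm.eq

lemma auxProdIdem (f : ι → R) (hi : ∀ i, f i * f i = f i)
    (hc : ∀ i j, Commute (f i) (f j)) :
    ∀ l : List ι, (l.map f).prod * (l.map f).prod = (l.map f).prod := by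
  intro l
  induction l with
  | nil => simp
  | cons a l ih =>
    have hcom : Commute (f a) ((l.map f).prod) :=
      Commute.list_prod_right _ _ (by
        intro x hx
        obtain ⟨j, _, rfl⟩ := List.mem_map.mp hx
        exact hc a j)
    simp only [List.map_cons, List.prod_cons]
    calc f a * (l.map f).prod * (f a * (l.map f).prod)
        = f a * ((l.map f).prod * f a) * (l.map f).prod := by noncomm_ring
      _ = f a * (f a * (l.map f).prod) * (l.map f).prod := by rw [hcom.symm.eq]
      _ = (f a * f a) * ((l.map f).prod * (l.map f).prod) := by noncomm_ring
      _ = f a * (l.map f).prod := by rw [hi a, ih]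

lemma auxProdKill (f : ι → R) (i : ι) (g : R) (h0 : f i * g = 0)
    (hc : ∀ j, Commute g (f j)) :
    ∀ l : List ι, i ∈ l → (l.map f).prod * g = 0 := by
  intro l
  induction l with
  | nil => intro h; exact absurd h List.not_mem_nil
  | cons a l ih =>
    intro h
    simp only [List.map_cons, List.prod_cons]
    rcases List.mem_cons.mp h with rfl | h
    · have hcom : Commute g ((l.map f).prod) :=
        Commute.list_prod_right _ _ (by
          intro x hx
          obtain ⟨j, _, rfl⟩ := List.mem_map.mp hx
          exact hc j)
      rw [mul_assoc, ← hcom.eq, ← mul_assoc, h0, zero_mul]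
    · rw [mul_assoc, ih h, mul_zero]

end Aux

section AuxMod

variable {E : Type*} [NormedAddCommGroup E] [NormedSpace ℂ E] {ι : Type*}

lemma auxSubProdMem (f : ι → E →L[ℂ] E) (S : Submodule ℂ E) :
    ∀ l : List ι, (∀ j ∈ l, ∀ x, x - f j x ∈ S) → (∀ j ∈ l, ∀ x ∈ S, f j x ∈ S) →
      ∀ x, x - ((l.map f).prod) x ∈ S := by
  intro l
  induction l with
  | nil => intro _ _ x; simp
  | cons a l ih =>
    intro h1 h2 x
    have hx : x - ((l.map f).prod) x ∈ S :=
      ih (fun j hj => h1 j (List.mem_cons_of_mem a hj))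
        (fun j hj => h2 j (List.mem_cons_of_mem a hj)) x
    have key : x - ((List.map f (a :: l)).prod) x
        = (x - f a x) + f a (x - ((l.map f).prod) x) := by
      simp only [List.map_cons, List.prod_cons, ContinuousLinearMap.mul_apply, map_sub]
      abel
    rw [key]
    exact S.add_mem (h1 a List.mem_cons_self x)
      (h2 a List.mem_cons_self _ hx)

lemma auxSumEqSup {R M : Type*} [Semiring R] [AddCommMonoid M] [Module R M]
    [Fintype ι] (p : ι → Submodule R M) :
    (∑ i, p i) = ⨆ i, p i := by
  classical
  rw [← Finset.sup_univ_eq_iSup]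
  induction (Finset.univ : Finset ι) using Finset.induction with
  | empty => simp [Submodule.zero_eq_bot]
  | insert x s h ih => simp [Finset.sum_insert h, Submodule.add_eq_sup, ih]

end AuxMod


/-- `ℓ²(ℕⁿ; ℂ)`, identified with the Hardy space `H²(𝔻ⁿ)` via Taylor coefficients. -/
abbrev HardyH (n : ℕ) : Type := lp (fun _ : Fin n → ℕ => ℂ) 2

/-- `T` is the `i`-th coordinate unilateral shift (multiplication by `zᵢ` on `H²(𝔻ⁿ)`):
`(T f) α = f (α − εᵢ)` if `αᵢ ≥ 1`, and `0` otherwise. -/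
def IsShift (n : ℕ) (i : Fin n) (T : HardyH n →L[ℂ] HardyH n) : Prop :=
  ∀ (f : HardyH n) (α : Fin n → ℕ),
    T f α = if 0 < α i then f (α - Pi.single i 1) else 0

/-- The standard basis vector at the zero multi-index (the constant function `1`). -/
def e₀ (n : ℕ) : HardyH n := lp.single 2 0 1

/-- `V` is a variable-`i` inner multiplier: an isometry commuting with every shift and
with the adjoints of the shifts in all the other variables (these are exactly the
multiplication operators by one-variable inner functions `Θ(zᵢ)`). -/
def IsInnerMult (n : ℕ) (i : Fin n) (Sh : Fin n → HardyH n →L[ℂ] HardyH n)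
    (V : HardyH n →L[ℂ] HardyH n) : Prop :=
  adjoint V * V = 1 ∧ (∀ j, V * Sh j = Sh j * V) ∧
    ∀ j, j ≠ i → V * adjoint (Sh j) = adjoint (Sh j) * V

/-- An admissible family: `Sh` are the coordinate shifts, each `V i` is a variable-`i`
inner multiplier, and the `V i` doubly commute with each other. -/
def IsAdmissible {n : ℕ} (Sh V : Fin n → HardyH n →L[ℂ] HardyH n) : Prop :=
  (∀ i, IsShift n i (Sh i)) ∧ (∀ i, IsInnerMult n i Sh (V i)) ∧
  (∀ i j, i ≠ j → V i * V j = V j * V i) ∧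
  (∀ i j, i ≠ j → adjoint (V i) * V j = V j * adjoint (V i))

set_option maxHeartbeats 2000000 in
set_option synthInstance.maxHeartbeats 400000 in
/-- For an admissible family `V₁, …, Vₙ`, the subspace
`S = ran V₁ + ⋯ + ran Vₙ` is closed and invariant under every shift, and the orthogonal
projection onto `S` is `I − (I − V₁V₁*)⋯(I − VₙVₙ*)` (expressed by: this operator is
self-adjoint, idempotent, with range `S`); equivalently the projection onto the quotient
module `Q = Sᗮ` is `∏ᵢ (I − VᵢVᵢ*)`, whose range is `Sᗮ`. -/
theorem projection_onto_co_doubly_commuting_submodule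
    {n : ℕ} (hn : 2 ≤ n) (Sh V : Fin n → HardyH n →L[ℂ] HardyH n)
    (hadm : IsAdmissible Sh V) :
    IsClosed ((∑ i, LinearMap.range (V i : HardyH n →ₗ[ℂ] HardyH n) : Submodule ℂ (HardyH n)) : Set (HardyH n)) ∧
    (∀ i, ∀ x ∈ (∑ i, LinearMap.range (V i : HardyH n →ₗ[ℂ] HardyH n) : Submodule ℂ (HardyH n)),
      Sh i x ∈ (∑ i, LinearMap.range (V i : HardyH n →ₗ[ℂ] HardyH n) : Submodule ℂ (HardyH n))) ∧
    IsSelfAdjoint (1 - (List.ofFn fun i => 1 - V i * adjoint (V i)).prod) ∧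
    (1 - (List.ofFn fun i => 1 - V i * adjoint (V i)).prod)
        * (1 - (List.ofFn fun i => 1 - V i * adjoint (V i)).prod)
      = 1 - (List.ofFn fun i => 1 - V i * adjoint (V i)).prod ∧
    LinearMap.range ((1 - (List.ofFn fun i => 1 - V i * adjoint (V i)).prod :
      HardyH n →L[ℂ] HardyH n) : HardyH n →ₗ[ℂ] HardyH n)
      = ∑ i, LinearMap.range (V i : HardyH n →ₗ[ℂ] HardyH n) ∧
    LinearMap.range (((List.ofFn fun i => 1 - V i * adjoint (V i)).prod :
      HardyH n →L[ℂ] HardyH n) : HardyH n →ₗ[ℂ] HardyH n)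
      = (∑ i, LinearMap.range (V i : HardyH n →ₗ[ℂ] HardyH n) : Submodule ℂ (HardyH n))ᗮ := by
  obtain ⟨hSh, hIM, hVcomm, hVadj⟩ := hadm
  simp only [List.ofFn_eq_map]
  set K : HardyH n →L[ℂ] HardyH n :=
    (List.map (fun i => 1 - V i * adjoint (V i)) (List.finRange n)).prod with hKdef
  set S : Submodule ℂ (HardyH n) := ∑ i, LinearMap.range (V i : HardyH n →ₗ[ℂ] HardyH n) with hSdef
  -- basic operators
  let P : Fin n → HardyH n →L[ℂ] HardyH n := fun i => V i * adjoint (V i)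
  let Qo : Fin n → HardyH n →L[ℂ] HardyH n := fun i => 1 - P i
  have hKQ : K = ((List.finRange n).map Qo).prod := hKdef
  have hiso : ∀ i, adjoint (V i) * V i = 1 := fun i => (hIM i).1
  have hPidem : ∀ i, P i * P i = P i := by
    intro i
    show V i * adjoint (V i) * (V i * adjoint (V i)) = V i * adjoint (V i)
    rw [mul_assoc, ← mul_assoc (adjoint (V i)), hiso i, one_mul]
  have hPstar : ∀ i, star (P i) = P i := by
    intro i
    show star (V i * adjoint (V i)) = V i * adjoint (V i)
    simp [star_mul, star_eq_adjoint, adjoint_adjoint]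
  have hPcomm : ∀ i j, Commute (P i) (P j) := by
    intro i j
    rcases eq_or_ne i j with rfl | hij
    · exact Commute.refl _
    have c1 : Commute (V i) (V j) := hVcomm i j hij
    have c2 : Commute (adjoint (V i)) (V j) := hVadj i j hij
    have c3 : Commute (V i) (adjoint (V j)) := (hVadj j i hij.symm).symm
    have c4 : Commute (adjoint (V i)) (adjoint (V j)) := by
      have := c1.star_star
      simpa [star_eq_adjoint] using this
    exact (c1.mul_right c3).mul_left (c2.mul_right c4)
  have hQstar : ∀ i, star (Qo i) = Qo i := by
    intro i
    show star (1 - P i) = 1 - P i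
    rw [star_sub, star_one, hPstar i]
  have hQidem : ∀ i, Qo i * Qo i = Qo i := by
    intro i
    show (1 - P i) * (1 - P i) = 1 - P i
    have h : (1 - P i) * (1 - P i) = 1 - P i - P i + P i * P i := by noncomm_ring
    rw [h, hPidem i]
    abel
  have hQcomm : ∀ i j, Commute (Qo i) (Qo j) := by
    intro i j
    exact (Commute.one_left _).sub_left ((Commute.one_right (P i)).sub_right (hPcomm i j))
  have hKstar : star K = K := by
    rw [hKQ]; exact auxProdStar Qo hQstar hQcomm _
  have hKidem : K * K = K := by
    rw [hKQ]; exact auxProdIdem Qo hQidem hQcomm _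
  have hKkill : ∀ i, K * P i = 0 := by
    intro i
    rw [hKQ]
    refine auxProdKill Qo i (P i) ?_ ?_ _ (List.mem_finRange i)
    · show (1 - P i) * P i = 0
      rw [sub_mul, one_mul, hPidem i, sub_self]
    · intro j
      exact (Commute.one_right (P i)).sub_right (hPcomm i j)
  have hPV : ∀ i, P i * V i = V i := by
    intro i
    show V i * adjoint (V i) * V i = V i
    rw [mul_assoc, hiso i, mul_one]
  have hKV : ∀ i, K * V i = 0 := by
    intro i
    rw [← hPV i, ← mul_assoc, hKkill i, zero_mul]
  -- the submodule S
  have hSsup : S = ⨆ i, LinearMap.range (V i : HardyH n →ₗ[ℂ] HardyH n) := auxSumEqSup _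
  have hmemS : ∀ i y, V i y ∈ S := by
    intro i y
    rw [hSsup]
    exact Submodule.mem_iSup_of_mem i ⟨y, rfl⟩
  have hSle : ∀ N : Submodule ℂ (HardyH n), (∀ i, LinearMap.range (V i : HardyH n →ₗ[ℂ] HardyH n) ≤ N) → S ≤ N := by
    intro N h
    rw [hSsup]
    exact iSup_le h
  have hcomap : ∀ T : HardyH n →L[ℂ] HardyH n,
      (∀ j y, T (V j y) ∈ S) → ∀ x ∈ S, T x ∈ S := by
    intro T hT x hx
    have : S ≤ Submodule.comap (T : HardyH n →ₗ[ℂ] HardyH n) S := by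
      refine hSle _ fun j => ?_
      rintro _ ⟨y, rfl⟩
      exact hT j y
    exact this hx
  have hKS : ∀ x ∈ S, K x = 0 := by
    intro x hx
    have : S ≤ LinearMap.ker (K : HardyH n →ₗ[ℂ] HardyH n) := by
      refine hSle _ fun i => ?_
      rintro _ ⟨y, rfl⟩
      show K (V i y) = 0
      rw [← ContinuousLinearMap.mul_apply, hKV i, ContinuousLinearMap.zero_apply]
    exact this hx
  have hE_apply : ∀ x, (1 - K) x = x - K x := by
    intro x
    simp [ContinuousLinearMap.sub_apply]
  have hQS : ∀ j, ∀ x ∈ S, Qo j x ∈ S := by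
    intro j
    refine hcomap (Qo j) fun i y => ?_
    rcases eq_or_ne j i with rfl | hij
    · have : Qo j (V j y) = 0 := by
        show ((1 - P j) * V j) y = 0
        rw [sub_mul, one_mul, hPV j, sub_self, ContinuousLinearMap.zero_apply]
      rw [this]; exact S.zero_mem
    · have ca : Commute (V j) (V i) := hVcomm j i hij
      have cb : Commute (adjoint (V j)) (V i) := hVadj j i hij
      have cPV : Commute (P j) (V i) := ca.mul_left cb
      have cQV : Commute (Qo j) (V i) := (Commute.one_left (V i)).sub_left cPV
      have : Qo j (V i y) = V i (Qo j y) := by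
        rw [← ContinuousLinearMap.mul_apply, cQV.eq, ContinuousLinearMap.mul_apply]
      rw [this]
      exact hmemS i _
  have hES : ∀ x, (1 - K) x ∈ S := by
    intro x
    rw [hE_apply, hKQ]
    refine auxSubProdMem Qo S (List.finRange n) ?_ ?_ x
    · intro j _ z
      have : z - Qo j z = P j z := by
        show z - ((1 : HardyH n →L[ℂ] HardyH n) z - P j z) = P j z
        rw [ContinuousLinearMap.one_apply, sub_sub_cancel]
      rw [this]
      exact hmemS j (adjoint (V j) z)
    · intro j _ z hz
      exact hQS j z hz
  have hrangeE : LinearMap.range ((1 - K : HardyH n →L[ℂ] HardyH n) : HardyH n →ₗ[ℂ] HardyH n) = S := by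
    apply le_antisymm
    · rintro _ ⟨x, rfl⟩
      exact hES x
    · intro x hx
      exact ⟨x, by show (1 - K) x = x; rw [hE_apply, hKS x hx, sub_zero]⟩
  have hEadj : adjoint (1 - K) = 1 - K := by
    rw [← star_eq_adjoint, star_sub, star_one, hKstar]
  have hEidem : (1 - K) * (1 - K) = 1 - K := by
    have h : (1 - K) * (1 - K) = 1 - K - K + K * K := by noncomm_ring
    rw [h, hKidem]
    abel
  have hkerE : LinearMap.ker ((1 - K : HardyH n →L[ℂ] HardyH n) : HardyH n →ₗ[ℂ] HardyH n) = Sᗮ := by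
    rw [← hrangeE]
    ext x
    constructor
    · intro hx
      have hx0 : (1 - K) x = 0 := hx
      rw [Submodule.mem_orthogonal]
      rintro _ ⟨y, rfl⟩
      rw [← hEadj, ContinuousLinearMap.coe_coe, ContinuousLinearMap.adjoint_inner_left, hx0, inner_zero_right]
    · intro hx
      have h1 : (inner ℂ ((1 - K) x) x : ℂ) = 0 :=
        (Submodule.mem_orthogonal _ x).mp hx _ ⟨x, rfl⟩
      have step1 := ContinuousLinearMap.adjoint_inner_right (𝕜 := ℂ) (1 - K) ((1 - K) x) x
      rw [hEadj] at step1
      have step2 : (1 - K) ((1 - K) x) = (1 - K) x := by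
        rw [← ContinuousLinearMap.mul_apply, hEidem]
      rw [step2] at step1
      show (1 - K) x = 0
      exact inner_self_eq_zero.mp (step1.trans h1)
  have hrangeK : LinearMap.range (K : HardyH n →ₗ[ℂ] HardyH n) = LinearMap.ker ((1 - K : HardyH n →L[ℂ] HardyH n) : HardyH n →ₗ[ℂ] HardyH n) := by
    apply le_antisymm
    · rintro _ ⟨y, rfl⟩
      show (1 - K) (K y) = 0
      rw [← ContinuousLinearMap.mul_apply]
      have : (1 - K) * K = 0 := by
        rw [sub_mul, one_mul, hKidem, sub_self]
      rw [this, ContinuousLinearMap.zero_apply]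
    · intro x hx
      have hx0 : (1 - K) x = 0 := hx
      rw [hE_apply] at hx0
      exact ⟨x, by show K x = x; rw [eq_comm, ← sub_eq_zero]; rw [← neg_sub, neg_eq_zero] at hx0 ⊢; exact hx0⟩
  refine ⟨?_, ?_, ?_, hEidem, hrangeE, hrangeK.trans hkerE⟩
  · have hset : (S : Set (HardyH n)) = (LinearMap.ker (K : HardyH n →ₗ[ℂ] HardyH n) : Set (HardyH n)) := by
      have : S = LinearMap.ker (K : HardyH n →ₗ[ℂ] HardyH n) := by
        apply le_antisymm
        · exact fun x hx => hKS x hx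
        · intro x hx
          rw [← hrangeE]
          exact ⟨x, by show (1 - K) x = x; rw [hE_apply, show K x = 0 from hx, sub_zero]⟩
      rw [this]
    rw [hset]
    exact ContinuousLinearMap.isClosed_ker K
  · intro i x hx
    refine hcomap (Sh i) (fun j y => ?_) x hx
    have : Sh i (V j y) = V j (Sh i y) := by
      rw [← ContinuousLinearMap.mul_apply, ← (hIM j).2.1 i, ContinuousLinearMap.mul_apply]
    rw [this]
    exact hmemS j _
  · show star (1 - K) = 1 - K
    rw [star_sub, star_one, hKstar]
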